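/- Let μ and π be probability measures on a measurable space with μ ≪ π and dμ/dπ − 1 ∈ L²(π). Then the χ²-divergence admits the variational representation χ²(μ‖π) = sup over h ∈ L²(π) of [∫ h dμ − ∫ (h + h²/4) dπ], and the supremum is attained at h* = 2(dμ/dπ − 1). (Each integral ∫ h dμ = ∫ h·(dμ/dπ) dπ is well defined since dμ/dπ ∈ L²(π) and h ∈ L²(π).) -/

import Mathlib

open MeasureTheory

lemma aux_mul_int {α : Type*} [MeasurableSpace α] {π : Measure α} {f g : α → ℝ}
    (hf : MemLp f 2 π) (hg : MemLp g 2 π) :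
    Integrable (fun x => f x * g x) π := by
  have : MemLp (f • g) 1 π := hg.smul hf (hpqr := ⟨by rw [ENNReal.inv_two_add_inv_two, inv_one]⟩)
  exact memLp_one_iff_integrable.mp this

/-- **Variational representation of the χ²-divergence.**
For probability measures `μ ≪ π` with `dμ/dπ − 1 ∈ L²(π)`, the χ²-divergence
`χ²(μ‖π) = ∫ (dμ/dπ − 1)² dπ` satisfies
`χ²(μ‖π) = sup_{h ∈ L²(π)} [∫ h dμ − ∫ (h + h²/4) dπ]`,
and the supremum is attained at `h* = 2 (dμ/dπ − 1)`. -/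
theorem stmt0 {α : Type*} [MeasurableSpace α] (μ π : Measure α)
    [IsProbabilityMeasure μ] [IsProbabilityMeasure π] (hμπ : μ ≪ π)
    (hL2 : MemLp (fun x => (μ.rnDeriv π x).toReal - 1) 2 π) :
    (∀ h : α → ℝ, MemLp h 2 π →
      (∫ x, h x ∂μ) - ∫ x, (h x + (h x) ^ 2 / 4) ∂π
        ≤ ∫ x, ((μ.rnDeriv π x).toReal - 1) ^ 2 ∂π) ∧
    ((∫ x, 2 * ((μ.rnDeriv π x).toReal - 1) ∂μ)
        - ∫ x, (2 * ((μ.rnDeriv π x).toReal - 1)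
            + (2 * ((μ.rnDeriv π x).toReal - 1)) ^ 2 / 4) ∂π
      = ∫ x, ((μ.rnDeriv π x).toReal - 1) ^ 2 ∂π) := by
  set f : α → ℝ := fun x => (μ.rnDeriv π x).toReal with hfdef
  have hfL2 : MemLp f 2 π := by
    have h1 := hL2.add (memLp_const (1 : ℝ))
    apply h1.ae_eq
    filter_upwards with x
    simp
    rfl
  have hsq : Integrable (fun x => (f x - 1) ^ 2) π := hL2.integrable_sq
  -- ∫ h dμ = ∫ f * h dπ for any h
  have key : ∀ h : α → ℝ, ∫ x, h x ∂μ = ∫ x, f x * h x ∂π := by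
    intro h
    rw [← integral_rnDeriv_smul hμπ]
    rfl
  constructor
  · intro h hh
    have hhi : Integrable h π := hh.integrable (by norm_num)
    have hh2 : Integrable (fun x => h x ^ 2) π := hh.integrable_sq
    have hfh : Integrable (fun x => f x * h x) π := aux_mul_int hfL2 hh
    have h3 : Integrable (fun x => f x * h x - h x) π := hfh.sub hhi
    rw [key h, integral_add hhi (hh2.div_const 4), ← sub_sub,
      ← integral_sub hfh hhi, ← integral_sub h3 (hh2.div_const 4)]
    apply integral_mono _ hsq
    · intro x
      simp only
      nlinarith [sq_nonneg (f x - 1 - h x / 2)]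
    · exact h3.sub (hh2.div_const 4)
  · have hg : Integrable (fun x => 2 * (f x - 1)) π := (hL2.integrable (by norm_num)).const_mul 2
    have hg2 : Integrable (fun x => (2 * (f x - 1)) ^ 2 / 4) π := by
      have : Integrable (fun x => (f x - 1) ^ 2) π := hsq
      apply (this.const_mul 4).div_const 4 |>.congr
      · exact Filter.Eventually.of_forall (fun x => by ring)
    have hfg : Integrable (fun x => f x * (2 * (f x - 1))) π :=
      aux_mul_int hfL2 (hL2.const_mul 2)
    have h3 : Integrable (fun x => f x * (2 * (f x - 1)) - 2 * (f x - 1)) π := hfg.sub hg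
    rw [key, integral_add hg hg2, ← sub_sub, ← integral_sub hfg hg,
      ← integral_sub h3 hg2]
    apply integral_congr_ae
    apply Filter.Eventually.of_forall
    intro x
    simp only
    ring
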